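/- Let φ be a continuous piecewise linear concave function on [Z₁, Z_N] with knots among Z₁ < Z₂ < ... < Z_N and with maximum attained at Z_k. Then φ can be written as φ(x) = C + Σ_{i=2}^{k} a_i·min(x - Z_i, 0) + Σ_{i=k}^{N-1} b_i·min(Z_i - x, 0) with all a_i ≥ 0 and b_i ≥ 0. In particular, the cone of such functions is finitely generated by the functions x ↦ min(x - Z_i, 0) (2 ≤ i ≤ k), x ↦ min(Z_i - x, 0) (k ≤ i ≤ N-1), and the constants ±1. -/

import Mathlib

lemma sum_icc_bot' (a b : ℕ) (h : a ≤ b) (f : ℕ → ℝ) :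
    ∑ i ∈ Finset.Icc a b, f i = f a + ∑ i ∈ Finset.Icc (a+1) b, f i := by
  have : Finset.Icc a b = insert a (Finset.Icc (a+1) b) := by
    ext x; simp only [Finset.mem_Icc, Finset.mem_insert]; omega
  rw [this, Finset.sum_insert (by simp)]

/-- Representation of a continuous piecewise linear concave function with knots
among `Z 1 < ⋯ < Z N` and maximum at `Z k` as a nonnegative combination of the
generators `x ↦ min (x - Z i) 0`, `x ↦ min (Z i - x) 0` and a constant. -/
theorem stmt11 (N : ℕ) (hN : 2 ≤ N) (Z : ℕ → ℝ)
    (hZ : StrictMonoOn Z (Set.Icc 1 N)) (k : ℕ) (hk1 : 1 ≤ k) (hkN : k ≤ N)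
    (φ : ℝ → ℝ)
    (hcont : ContinuousOn φ (Set.Icc (Z 1) (Z N)))
    (hconc : ConcaveOn ℝ (Set.Icc (Z 1) (Z N)) φ)
    (hpl : ∀ i : ℕ, 1 ≤ i → i < N → ∃ s c : ℝ,
      ∀ x ∈ Set.Icc (Z i) (Z (i+1)), φ x = s * x + c)
    (hmax : ∀ x ∈ Set.Icc (Z 1) (Z N), φ x ≤ φ (Z k)) :
    ∃ (C : ℝ) (a b : ℕ → ℝ), (∀ i, 0 ≤ a i) ∧ (∀ i, 0 ≤ b i) ∧
      ∀ x ∈ Set.Icc (Z 1) (Z N),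
        φ x = C + (∑ i ∈ Finset.Icc 2 k, a i * min (x - Z i) 0)
          + ∑ i ∈ Finset.Icc k (N-1), b i * min (Z i - x) 0 := by
  classical
  choose! S Cc hSC using hpl
  -- basic monotonicity facts
  have hlt : ∀ p q, 1 ≤ p → p < q → q ≤ N → Z p < Z q := fun p q h1 h2 h3 =>
    hZ ⟨h1, le_trans (le_of_lt h2) h3⟩ ⟨by omega, h3⟩ h2
  have hle : ∀ p q, 1 ≤ p → p ≤ q → q ≤ N → Z p ≤ Z q := by
    intro p q h1 h2 h3
    rcases eq_or_lt_of_le h2 with rfl | h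
    · exact le_refl _
    · exact (hlt p q h1 h h3).le
  have hmem : ∀ p, 1 ≤ p → p ≤ N → Z p ∈ Set.Icc (Z 1) (Z N) := fun p h1 h2 =>
    ⟨hle 1 p le_rfl h1 h2, hle p N h1 h2 le_rfl⟩
  -- the slope/intercept property at the endpoints
  have hdiff : ∀ i, 1 ≤ i → i < N →
      φ (Z (i+1)) - φ (Z i) = S i * (Z (i+1) - Z i) := by
    intro i h1 h2
    have e1 := hSC i h1 h2 (Z i) ⟨le_rfl, (hlt i (i+1) h1 (by omega) (by omega)).le⟩
    have e2 := hSC i h1 h2 (Z (i+1)) ⟨(hlt i (i+1) h1 (by omega) (by omega)).le, le_rfl⟩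
    rw [e1, e2]; ring
  -- concavity: slopes are antitone
  have hslope : ∀ i, 1 ≤ i → i + 1 < N → S (i+1) ≤ S i := by
    intro i h1 h2
    have hx : Z i ∈ Set.Icc (Z 1) (Z N) := hmem i h1 (by omega)
    have hz : Z (i+2) ∈ Set.Icc (Z 1) (Z N) := hmem (i+2) (by omega) (by omega)
    have hxy : Z i < Z (i+1) := hlt i (i+1) h1 (by omega) (by omega)
    have hyz : Z (i+1) < Z (i+2) := hlt (i+1) (i+2) (by omega) (by omega) (by omega)
    have key := hconc.slope_anti_adjacent hx hz hxy hyz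
    have d1 := hdiff i h1 (by omega)
    have d2 := hdiff (i+1) (by omega) (by omega)
    rw [d1, d2] at key
    rw [mul_div_assoc, mul_div_assoc, div_self (by linarith), div_self (by linarith),
      mul_one, mul_one] at key
    exact key
  have hslope' : ∀ i, 2 ≤ i → i < N → S i ≤ S (i-1) := by
    intro i h1 h2
    have := hslope (i-1) (by omega) (by omega)
    have e : i - 1 + 1 = i := by omega
    rwa [e] at this
  -- sign of slopes at the mode
  have hsk : 2 ≤ k → 0 ≤ S (k-1) := by
    intro h2
    have hd := hdiff (k-1) (by omega) (by omega)
    have e : k - 1 + 1 = k := by omega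
    rw [e] at hd
    have hm := hmax (Z (k-1)) (hmem (k-1) (by omega) (by omega))
    have hp : Z (k-1) < Z k := hlt (k-1) k (by omega) (by omega) hkN
    nlinarith
  have hsk2 : k < N → S k ≤ 0 := by
    intro h2
    have hd := hdiff k hk1 h2
    have hm := hmax (Z (k+1)) (hmem (k+1) (by omega) (by omega))
    have hp : Z k < Z (k+1) := hlt k (k+1) hk1 (by omega) (by omega)
    nlinarith
  -- the coefficient functions
  set a' : ℕ → ℝ := fun i => if i = k then S (k-1) else S (i-1) - S i with ha'
  set b' : ℕ → ℝ := fun i => if i = k then -(S k) else S (i-1) - S i with hb'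
  have ha'k : a' k = S (k-1) := by simp [ha']
  have ha'ne : ∀ i, i ≠ k → a' i = S (i-1) - S i := by intro i h; simp [ha', h]
  have hb'k : b' k = -(S k) := by simp [hb']
  have hb'ne : ∀ i, i ≠ k → b' i = S (i-1) - S i := by intro i h; simp [hb', h]
  -- telescoping sums
  have htelL : ∀ d j, 1 ≤ j → j + d + 1 = k →
      ∑ i ∈ Finset.Icc (j+1) k, a' i = S j := by
    intro d
    induction d with
    | zero =>
      intro j h1 hjk
      have hs : Finset.Icc (j+1) k = {k} := by
        ext x; simp only [Finset.mem_Icc, Finset.mem_singleton]; omega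
      rw [hs, Finset.sum_singleton, ha'k]
      congr 1; omega
    | succ d ih =>
      intro j h1 hjk
      rw [sum_icc_bot' (j+1) k (by omega) a']
      rw [ih (j+1) (by omega) (by omega)]
      rw [ha'ne (j+1) (by omega)]
      have e : j + 1 - 1 = j := by omega
      rw [e]; ring
  have htelR : ∀ d j, k + d = j → j + 1 ≤ N →
      ∑ i ∈ Finset.Icc k j, b' i = -(S j) := by
    intro d
    induction d with
    | zero =>
      intro j hjk hjN
      have hj : j = k := by omega
      rw [hj, Finset.Icc_self, Finset.sum_singleton, hb'k]
    | succ d ih =>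
      intro j hjk hjN
      obtain ⟨j', rfl⟩ : ∃ j', j = j' + 1 := ⟨k + d, by omega⟩
      rw [Finset.sum_Icc_succ_top (by omega : k ≤ j' + 1)]
      rw [ih j' (by omega) (by omega)]
      rw [hb'ne (j'+1) (by omega)]
      have e : j' + 1 - 1 = j' := by omega
      rw [e]; ring
  -- the left identity
  have hleft : ∀ d j, 1 ≤ j → j + d = k → ∀ x ∈ Set.Icc (Z j) (Z k),
      φ x = φ (Z k) + ∑ i ∈ Finset.Icc (j+1) k, a' i * min (x - Z i) 0 := by
    intro d
    induction d with
    | zero =>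
      intro j h1 hjk x hx
      have hj : j = k := by omega
      rw [hj] at hx
      have hxk : x = Z k := le_antisymm hx.2 hx.1
      have hs : Finset.Icc (j+1) k = ∅ := Finset.Icc_eq_empty (by omega)
      rw [hs, Finset.sum_empty, hxk, add_zero]
    | succ d ih =>
      intro j h1 hjk x hx
      have hj1k : j + 1 ≤ k := by omega
      have hjN : j < N := by omega
      have hZj1k : Z (j+1) ≤ Z k := hle (j+1) k (by omega) hj1k hkN
      rcases le_total (Z (j+1)) x with hcase | hcase
      · -- x ≥ Z (j+1) : use IH directly
        have := ih (j+1) (by omega) (by omega) x ⟨hcase, hx.2⟩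
        rw [this, sum_icc_bot' (j+1) k hj1k]
        have : min (x - Z (j+1)) 0 = 0 := min_eq_right (by linarith)
        rw [this, mul_zero, zero_add]
      · -- x ≤ Z (j+1) : affine piece
        have hφx := hSC j h1 hjN x ⟨hx.1, hcase⟩
        have hφZ := hSC j h1 hjN (Z (j+1))
          ⟨(hlt j (j+1) h1 (by omega) (by omega)).le, le_rfl⟩
        have hIH := ih (j+1) (by omega) (by omega) (Z (j+1)) ⟨le_rfl, hZj1k⟩
        -- rewrite mins in the IH sum: for i ≥ j+2, Z (j+1) ≤ Z i
        have hIH' : φ (Z (j+1)) = φ (Z k) +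
            ∑ i ∈ Finset.Icc (j+2) k, a' i * (Z (j+1) - Z i) := by
          rw [hIH]
          congr 1
          refine Finset.sum_congr rfl (fun i hi => ?_)
          simp only [Finset.mem_Icc] at hi
          have : Z (j+1) ≤ Z i := hle (j+1) i (by omega) (by omega) (le_trans hi.2 hkN)
          rw [min_eq_left (by linarith)]
        -- the goal sum with mins replaced
        have hgoal : ∑ i ∈ Finset.Icc (j+1) k, a' i * min (x - Z i) 0
            = ∑ i ∈ Finset.Icc (j+1) k, a' i * (x - Z i) := by
          refine Finset.sum_congr rfl (fun i hi => ?_)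
          simp only [Finset.mem_Icc] at hi
          have : Z (j+1) ≤ Z i := hle (j+1) i (by omega) hi.1 (le_trans hi.2 hkN)
          rw [min_eq_left (by linarith)]
        rw [hgoal, hφx]
        have hsplit : ∑ i ∈ Finset.Icc (j+1) k, a' i * (x - Z i)
            = (∑ i ∈ Finset.Icc (j+1) k, a' i * (Z (j+1) - Z i))
              + (∑ i ∈ Finset.Icc (j+1) k, a' i) * (x - Z (j+1)) := by
          rw [Finset.sum_mul, ← Finset.sum_add_distrib]
          refine Finset.sum_congr rfl (fun i hi => ?_)
          ring
        rw [hsplit, htelL d j h1 (by omega)]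
        have hext : ∑ i ∈ Finset.Icc (j+1) k, a' i * (Z (j+1) - Z i)
            = ∑ i ∈ Finset.Icc (j+2) k, a' i * (Z (j+1) - Z i) := by
          rw [sum_icc_bot' (j+1) k hj1k]
          simp
        rw [hext]
        rw [hφZ] at hIH'
        linarith [hIH']
  -- the right identity
  have hright : ∀ d j, k + d = j → j ≤ N → ∀ x ∈ Set.Icc (Z k) (Z j),
      φ x = φ (Z k) + ∑ i ∈ Finset.Icc k (j-1), b' i * min (Z i - x) 0 := by
    intro d
    induction d with
    | zero =>
      intro j hjk hjN x hx
      have hj : j = k := by omega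
      rw [hj] at hx
      have hxk : x = Z k := le_antisymm hx.2 hx.1
      have hs : Finset.Icc k (j-1) = ∅ := Finset.Icc_eq_empty (by omega)
      rw [hs, Finset.sum_empty, hxk, add_zero]
    | succ d ih =>
      intro j hjk hjN x hx
      obtain ⟨j', rfl⟩ : ∃ j', j = j' + 1 := ⟨k + d, by omega⟩
      have hkj' : k ≤ j' := by omega
      have hj'1 : 1 ≤ j' := by omega
      have hj'N : j' < N := by omega
      have hZkj' : Z k ≤ Z j' := hle k j' hk1 hkj' (by omega)
      have e : j' + 1 - 1 = j' := by omega
      rw [e]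
      have hsplitTop : ∀ f : ℕ → ℝ, ∑ i ∈ Finset.Icc k j', f i
          = (∑ i ∈ Finset.Icc k (j'-1), f i) + f j' := by
        intro f
        obtain ⟨m, hm⟩ : ∃ m, j' = m + 1 := ⟨j'-1, by omega⟩
        subst hm
        rw [Finset.sum_Icc_succ_top (by omega : k ≤ m + 1)]
        simp
      rcases le_total x (Z j') with hcase | hcase
      · -- x ≤ Z j' : use IH
        have hIH := ih j' (by omega) (by omega) x ⟨hx.1, hcase⟩
        rw [hIH, hsplitTop (fun i => b' i * min (Z i - x) 0)]
        have h0 : min (Z j' - x) 0 = 0 := min_eq_right (by linarith)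
        rw [h0, mul_zero, add_zero]
      · -- x ≥ Z j' : affine piece
        have hφx := hSC j' hj'1 hj'N x ⟨hcase, hx.2⟩
        have hφZ := hSC j' hj'1 hj'N (Z j')
          ⟨le_rfl, (hlt j' (j'+1) hj'1 (by omega) (by omega)).le⟩
        have hIH := ih j' (by omega) (by omega) (Z j') ⟨hZkj', le_rfl⟩
        have hIH' : φ (Z j') = φ (Z k) +
            ∑ i ∈ Finset.Icc k j', b' i * (Z i - Z j') := by
          rw [hIH, hsplitTop (fun i => b' i * (Z i - Z j'))]
          have hsum : ∑ i ∈ Finset.Icc k (j'-1), b' i * min (Z i - Z j') 0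
              = ∑ i ∈ Finset.Icc k (j'-1), b' i * (Z i - Z j') := by
            refine Finset.sum_congr rfl (fun i hi => ?_)
            simp only [Finset.mem_Icc] at hi
            have : Z i ≤ Z j' := hle i j' (by omega) (by omega) (by omega)
            rw [min_eq_left (by linarith)]
          rw [hsum]
          ring
        have hgoal : ∑ i ∈ Finset.Icc k j', b' i * min (Z i - x) 0
            = ∑ i ∈ Finset.Icc k j', b' i * (Z i - x) := by
          refine Finset.sum_congr rfl (fun i hi => ?_)
          simp only [Finset.mem_Icc] at hi
          have : Z i ≤ Z j' := hle i j' (by omega) hi.2 (by omega)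
          rw [min_eq_left (by linarith)]
        rw [hgoal, hφx]
        have hsplit : ∑ i ∈ Finset.Icc k j', b' i * (Z i - x)
            = (∑ i ∈ Finset.Icc k j', b' i * (Z i - Z j'))
              + (∑ i ∈ Finset.Icc k j', b' i) * (Z j' - x) := by
          rw [Finset.sum_mul, ← Finset.sum_add_distrib]
          refine Finset.sum_congr rfl (fun i hi => ?_)
          ring
        rw [hsplit, htelR d j' (by omega) (by omega)]
        rw [hφZ] at hIH'
        linarith [hIH']
  -- assemble
  refine ⟨φ (Z k),
    (fun i => if 2 ≤ i ∧ i ≤ k then a' i else 0),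
    (fun i => if k ≤ i ∧ i ≤ N - 1 then b' i else 0), ?_, ?_, ?_⟩
  · intro i
    dsimp only
    by_cases h : 2 ≤ i ∧ i ≤ k
    · rw [if_pos h]
      by_cases hik : i = k
      · subst hik
        rw [ha'k]
        exact hsk (by omega)
      · rw [ha'ne i hik]
        have := hslope' i h.1 (by omega)
        linarith
    · rw [if_neg h]
  · intro i
    dsimp only
    by_cases h : k ≤ i ∧ i ≤ N - 1
    · rw [if_pos h]
      by_cases hik : i = k
      · subst hik
        rw [hb'k]
        have := hsk2 (by omega)
        linarith
      · rw [hb'ne i hik]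
        have := hslope' i (by omega) (by omega)
        linarith
    · rw [if_neg h]
  · intro x hx
    dsimp only
    have hsumA : ∑ i ∈ Finset.Icc 2 k,
        (if 2 ≤ i ∧ i ≤ k then a' i else 0) * min (x - Z i) 0
        = ∑ i ∈ Finset.Icc 2 k, a' i * min (x - Z i) 0 := by
      refine Finset.sum_congr rfl (fun i hi => ?_)
      simp only [Finset.mem_Icc] at hi
      rw [if_pos hi]
    have hsumB : ∑ i ∈ Finset.Icc k (N-1),
        (if k ≤ i ∧ i ≤ N - 1 then b' i else 0) * min (Z i - x) 0
        = ∑ i ∈ Finset.Icc k (N-1), b' i * min (Z i - x) 0 := by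
      refine Finset.sum_congr rfl (fun i hi => ?_)
      simp only [Finset.mem_Icc] at hi
      rw [if_pos hi]
    rw [hsumA, hsumB]
    rcases le_total x (Z k) with hcase | hcase
    · -- left region
      have hBzero : ∑ i ∈ Finset.Icc k (N-1), b' i * min (Z i - x) 0 = 0 := by
        refine Finset.sum_eq_zero (fun i hi => ?_)
        simp only [Finset.mem_Icc] at hi
        have : Z k ≤ Z i := hle k i hk1 hi.1 (by omega)
        rw [min_eq_right (by linarith), mul_zero]
      rw [hBzero, add_zero]
      have := hleft (k-1) 1 le_rfl (by omega) x ⟨hx.1, hcase⟩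
      simpa using this
    · -- right region
      have hAzero : ∑ i ∈ Finset.Icc 2 k, a' i * min (x - Z i) 0 = 0 := by
        refine Finset.sum_eq_zero (fun i hi => ?_)
        simp only [Finset.mem_Icc] at hi
        have : Z i ≤ Z k := hle i k (by omega) hi.2 hkN
        rw [min_eq_right (by linarith), mul_zero]
      rw [hAzero, add_zero]
      have := hright (N-k) N (by omega) le_rfl x ⟨hcase, hx.2⟩
      exact this
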